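/- arXiv:1701.06540 — 5 statements merged into one kernel-verified Lean document; each statement's English description precedes it below -/
import Mathlib

section
/- Let y ∈ ℤⁿ and r ∈ ℝⁿ. For every ε > 0 and every λ̄ ≥ 0, there exists a point z ∈ ℤⁿ whose Euclidean distance from the half-line {y + λr : λ ≥ λ̄} is less than ε. -/
open scoped BigOperators Pointwise

noncomputable section

/-- Euclidean space `ℝⁿ`. -/
abbrev E (n : ℕ) := EuclideanSpace ℝ (Fin n)

/-- Dot product on `ℝⁿ`. -/
def dot {n : ℕ} (x y : E n) : ℝ := ∑ i, x i * y i

/-- A point with integral coordinates. -/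
def IsIntPt {n : ℕ} (x : E n) : Prop := ∀ i, ∃ m : ℤ, x i = (m : ℝ)

/-- A vector with rational coordinates. -/
def IsRatVec {n : ℕ} (x : E n) : Prop := ∀ i, ∃ q : ℚ, x i = (q : ℝ)

/-- `S` is the set of integral points of a rational polyhedron `{x | Ax ≤ b}`. -/
def IsIntPtsOfRatPolyhedron {n : ℕ} (S : Set (E n)) : Prop :=
  ∃ (m : ℕ) (A : Fin m → E n) (b : Fin m → ℝ),
    (∀ i, IsRatVec (A i)) ∧ (∀ i, ∃ q : ℚ, b i = (q : ℝ)) ∧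
    S = {x | IsIntPt x ∧ ∀ i, dot (A i) x ≤ b i}

/-- `dim S = n`: `S` contains `n+1` affinely independent points. -/
def FullDimSet {n : ℕ} (S : Set (E n)) : Prop :=
  ∃ p : Fin (n + 1) → E n, (∀ i, p i ∈ S) ∧ AffineIndependent ℝ p

/-- `B` is `S`-free: the interior of `B` contains no point of `S`. -/
def SFree {n : ℕ} (S B : Set (E n)) : Prop := ∀ x ∈ interior B, x ∉ S

/-- `B` is a maximal `S`-free convex set. -/
def MaxSFree {n : ℕ} (S B : Set (E n)) : Prop :=
  Convex ℝ B ∧ SFree S B ∧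
    ∀ C : Set (E n), Convex ℝ C → SFree S C → B ⊆ C → B = C

/-- `B` is lattice-free: no integral point in its interior. -/
def LatticeFree {n : ℕ} (B : Set (E n)) : Prop := ∀ x ∈ interior B, ¬ IsIntPt x

/-- `B` is a maximal lattice-free convex set. -/
def MaxLatticeFree {n : ℕ} (B : Set (E n)) : Prop :=
  Convex ℝ B ∧ LatticeFree B ∧
    ∀ C : Set (E n), Convex ℝ C → LatticeFree C → B ⊆ C → B = C

/-- A polyhedron: finite intersection of closed half-spaces. -/
def IsPolyhedron {n : ℕ} (B : Set (E n)) : Prop :=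
  ∃ (m : ℕ) (a : Fin m → E n) (c : Fin m → ℝ), B = {x | ∀ i, dot (a i) x ≤ c i}

/-- A polytope: convex hull of finitely many points. -/
def IsPolytope {n : ℕ} (P : Set (E n)) : Prop :=
  ∃ V : Finset (E n), P = convexHull ℝ (V : Set (E n))

/-- Dimension of a set: dimension of its affine hull. -/
def sdim {n : ℕ} (A : Set (E n)) : ℕ := Module.finrank ℝ (affineSpan ℝ A).direction

/-- `F` is a face of the convex set `B`. -/
def IsFaceOf {n : ℕ} (F B : Set (E n)) : Prop :=
  F ⊆ B ∧ Convex ℝ F ∧ ∀ x ∈ B, ∀ y ∈ B, ∀ t : ℝ, 0 < t → t < 1 →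
    t • x + (1 - t) • y ∈ F → x ∈ F ∧ y ∈ F

/-- `F` is a facet of `B`: a nonempty face of dimension `dim B - 1`. -/
def IsFacetOf {n : ℕ} (F B : Set (E n)) : Prop :=
  IsFaceOf F B ∧ F.Nonempty ∧ sdim F + 1 = sdim B

/-- Recession cone of `K`. -/
def recCone {n : ℕ} (K : Set (E n)) : Set (E n) :=
  {d | ∀ x ∈ K, ∀ t : ℝ, 0 ≤ t → x + t • d ∈ K}

/-- Lineality space of `K`. -/
def linSpace {n : ℕ} (K : Set (E n)) : Set (E n) :=
  {d | d ∈ recCone K ∧ -d ∈ recCone K}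

/-- The set of all finite nonnegative combinations of elements of `G`. -/
def conicHullOf {n : ℕ} (G : Set (E n)) : Set (E n) :=
  {x | ∃ (m : ℕ) (c : Fin m → ℝ) (v : Fin m → E n),
    (∀ i, 0 ≤ c i) ∧ (∀ i, v i ∈ G) ∧ x = ∑ i, c i • v i}

/-- A cone is rational if it is generated by vectors with rational coordinates. -/
def IsRationalCone {n : ℕ} (C : Set (E n)) : Prop :=
  ∃ G : Set (E n), (∀ v ∈ G, IsRatVec v) ∧ C = conicHullOf G

/-- A linear subspace is rational if it is spanned by rational vectors. -/
def IsRationalSubspace {n : ℕ} (L : Submodule ℝ (E n)) : Prop :=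
  ∃ G : Set (E n), (∀ v ∈ G, IsRatVec v) ∧ L = Submodule.span ℝ G

/-- The hyperplane `{x | a·x = β}` is a supporting hyperplane of `C`. -/
def IsSupportingHyperplane {n : ℕ} (a : E n) (β : ℝ) (C : Set (E n)) : Prop :=
  ((∀ x ∈ C, dot a x ≤ β) ∨ (∀ x ∈ C, β ≤ dot a x)) ∧
    ∃ x ∈ closure C, dot a x = β

/-- `ψ` is a valid function with respect to `f` and `S`. -/
def ValidFn {n : ℕ} (S : Set (E n)) (f : E n) (ψ : E n → ℝ) : Prop :=
  ∀ s : (E n) →₀ ℝ, (∀ r, 0 ≤ s r) →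
    (f + s.sum fun r c => c • r) ∈ S →
    1 ≤ s.sum fun r c => ψ r * c

/-- Sublinear: positively homogeneous and subadditive. -/
def Sublinear {n : ℕ} (ψ : E n → ℝ) : Prop :=
  (∀ t : ℝ, 0 ≤ t → ∀ r, ψ (t • r) = t * ψ r) ∧
  (∀ r r', ψ (r + r') ≤ ψ r + ψ r')

/-- Polar of `K`. -/
def polar {n : ℕ} (K : Set (E n)) : Set (E n) := {y | ∀ r ∈ K, dot y r ≤ 1}

/-- `K̂ = {y ∈ K* | ∃ x ∈ K, x·y = 1}`. -/
def Khat {n : ℕ} (K : Set (E n)) : Set (E n) :=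
  {y | y ∈ polar K ∧ ∃ x ∈ K, dot x y = 1}

/-- `ρ_K(r) = sup { y·r | y ∈ K̂ }`. -/
def rho {n : ℕ} (K : Set (E n)) (r : E n) : ℝ :=
  sSup ((fun y => dot y r) '' Khat K)

lemma dirichlet_sim {n : ℕ} (r : Fin n → ℝ) {δ : ℝ} (hδ : 0 < δ) :
    ∃ q : ℕ, 1 ≤ q ∧ ∃ p : Fin n → ℤ, ∀ i, |(q : ℝ) * r i - (p i : ℝ)| < δ := by
  obtain ⟨K, hK1, hKδ⟩ : ∃ K : ℕ, 0 < K ∧ 1 / δ < (K : ℝ) := by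
    refine ⟨⌈1/δ⌉₊ + 1, Nat.succ_pos _, ?_⟩
    push_cast
    exact lt_of_le_of_lt (Nat.le_ceil _) (by linarith)
  have hKpos : (0:ℝ) < K := by exact_mod_cast hK1
  -- box map
  have hbox : ∀ (k : ℕ) (i : Fin n), (⌊(K:ℝ) * Int.fract ((k:ℝ) * r i)⌋).toNat < K := by
    intro k i
    have h0 : (0:ℝ) ≤ Int.fract ((k:ℝ) * r i) := Int.fract_nonneg _
    have h1 : Int.fract ((k:ℝ) * r i) < 1 := Int.fract_lt_one _
    have : ⌊(K:ℝ) * Int.fract ((k:ℝ) * r i)⌋ < (K:ℤ) := by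
      apply Int.floor_lt.2
      push_cast
      nlinarith
    omega
  set f : Fin (K ^ n + 1) → (Fin n → Fin K) := fun k i =>
    ⟨(⌊(K:ℝ) * Int.fract ((k:ℝ) * r i)⌋).toNat, hbox k i⟩ with hf
  obtain ⟨a, b, hab, hfab⟩ := Fintype.exists_ne_map_eq_of_card_lt f (by simp)
  wlog hlt : (a:ℕ) < (b:ℕ) generalizing a b
  · exact this b a hab.symm hfab.symm (by omega)
  refine ⟨(b:ℕ) - (a:ℕ), by omega, fun i => ⌊((b:ℕ):ℝ) * r i⌋ - ⌊((a:ℕ):ℝ) * r i⌋, ?_⟩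
  intro i
  have heq : (⌊(K:ℝ) * Int.fract (((a:ℕ):ℝ) * r i)⌋).toNat
      = (⌊(K:ℝ) * Int.fract (((b:ℕ):ℝ) * r i)⌋).toNat := by
    have := congrFun hfab i
    simpa [hf, Fin.ext_iff] using this
  have hflr : ⌊(K:ℝ) * Int.fract (((a:ℕ):ℝ) * r i)⌋
      = ⌊(K:ℝ) * Int.fract (((b:ℕ):ℝ) * r i)⌋ := by
    have ha : 0 ≤ ⌊(K:ℝ) * Int.fract (((a:ℕ):ℝ) * r i)⌋ :=
      Int.floor_nonneg.2 (mul_nonneg hKpos.le (Int.fract_nonneg _))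
    have hb : 0 ≤ ⌊(K:ℝ) * Int.fract (((b:ℕ):ℝ) * r i)⌋ :=
      Int.floor_nonneg.2 (mul_nonneg hKpos.le (Int.fract_nonneg _))
    omega
  -- |fract b - fract a| < 1/K
  set xa := Int.fract (((a:ℕ):ℝ) * r i)
  set xb := Int.fract (((b:ℕ):ℝ) * r i)
  have h1 : |xb - xa| < 1 / K := by
    have hfa := Int.fract_nonneg ((K:ℝ) * xa) -- not what I want; do manually
    have ha1 : (⌊(K:ℝ) * xa⌋ : ℝ) ≤ (K:ℝ) * xa := Int.floor_le _
    have ha2 : (K:ℝ) * xa < ⌊(K:ℝ) * xa⌋ + 1 := Int.lt_floor_add_one _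
    have hb1 : (⌊(K:ℝ) * xb⌋ : ℝ) ≤ (K:ℝ) * xb := Int.floor_le _
    have hb2 : (K:ℝ) * xb < ⌊(K:ℝ) * xb⌋ + 1 := Int.lt_floor_add_one _
    rw [hflr] at ha1 ha2
    rw [lt_div_iff₀ hKpos, ← abs_of_pos hKpos, ← abs_mul, abs_lt]
    constructor <;> nlinarith
  have hdelta : 1 / (K:ℝ) < δ := by
    rw [div_lt_iff₀ hKpos]
    calc (1:ℝ) = δ * (1/δ) := by field_simp
    _ < δ * K := by nlinarith [one_div_pos.2 hδ]
  have key : (((b:ℕ) - (a:ℕ) : ℕ) : ℝ) * r i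
      - ((⌊((b:ℕ):ℝ) * r i⌋ - ⌊((a:ℕ):ℝ) * r i⌋ : ℤ) : ℝ) = xb - xa := by
    have hcast : (((b:ℕ) - (a:ℕ) : ℕ) : ℝ) = ((b:ℕ):ℝ) - ((a:ℕ):ℝ) := by
      push_cast [Nat.cast_sub hlt.le]; ring
    simp only [xa, xb, Int.fract]
    push_cast [hcast]
    ring
  rw [key]
  exact lt_trans h1 hdelta

lemma norm_le_of_coord {n : ℕ} (v : E n) {c : ℝ} (hc : 0 ≤ c)
    (h : ∀ i, |v i| ≤ c) : ‖v‖ ≤ n * c := by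
  rw [EuclideanSpace.norm_eq]
  simp only [Real.norm_eq_abs, sq_abs]
  have : ∑ i, v i ^ 2 ≤ (n * c)^2 := by
    calc ∑ i, v i ^ 2 ≤ ∑ _i : Fin n, c ^ 2 := by
          apply Finset.sum_le_sum
          intro i _
          have := h i
          nlinarith [abs_nonneg (v i), sq_abs (v i)]
      _ = n * c ^ 2 := by simp [mul_comm]
      _ ≤ (n * c)^2 := by
          have h2 : (n:ℝ) ≤ (n:ℝ)^2 := by exact_mod_cast Nat.le_self_pow two_ne_zero n
          nlinarith [sq_nonneg c]
  calc Real.sqrt (∑ i, v i ^ 2) ≤ Real.sqrt ((n*c)^2) := Real.sqrt_le_sqrt this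
    _ = n * c := Real.sqrt_sq (by positivity)


/-- Dirichlet-type lemma: integral points come arbitrarily close to any
half-line starting at an integral point. -/
theorem stmt_4 {n : ℕ} (y r : E n) (hy : IsIntPt y) :
    ∀ ε : ℝ, 0 < ε → ∀ lb : ℝ, 0 ≤ lb →
    ∃ z : E n, IsIntPt z ∧
      Metric.infDist z {p : E n | ∃ l : ℝ, lb ≤ l ∧ p = y + l • r} < ε := by
  intro ε hε lb hlb
  set m : ℕ := ⌈lb⌉₊ + 1 with hm
  have hm1 : 1 ≤ m := Nat.le_add_left 1 _
  have hmlb : lb ≤ (m : ℝ) := le_trans (Nat.le_ceil lb) (by push_cast [hm]; linarith)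
  have hmpos : (0:ℝ) < m := by positivity
  set δ : ℝ := ε / (m * (n + 1)) with hδdef
  have hδ : 0 < δ := by positivity
  obtain ⟨q, hq1, p, hp⟩ := dirichlet_sim (fun i => r i) hδ
  have hq1' : (1:ℝ) ≤ q := by exact_mod_cast hq1
  set l : ℝ := (m : ℝ) * q with hl
  have hlbl : lb ≤ l := le_trans hmlb (by nlinarith)
  set z : E n := WithLp.toLp 2 (fun i => y i + (m : ℝ) * (p i : ℝ)) with hz
  refine ⟨z, ?_, ?_⟩
  · intro i
    obtain ⟨my, hmy⟩ := hy i
    exact ⟨my + m * p i, by push_cast [hz, hmy]; ring⟩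
  · have hmem : y + l • r ∈ {p : E n | ∃ l : ℝ, lb ≤ l ∧ p = y + l • r} :=
      ⟨l, hlbl, rfl⟩
    refine lt_of_le_of_lt (Metric.infDist_le_dist_of_mem hmem) ?_
    rw [dist_eq_norm]
    have hco : ∀ i, |(z - (y + l • r)) i| ≤ (m:ℝ) * δ := by
      intro i
      have : (z - (y + l • r)) i = (m:ℝ) * ((p i : ℝ) - (q:ℝ) * r i) := by
        simp [hz, hl, PiLp.sub_apply, PiLp.add_apply, PiLp.smul_apply, smul_eq_mul]
        ring
      rw [this, abs_mul, abs_of_pos hmpos]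
      have := (hp i)
      have h2 : |(p i : ℝ) - (q:ℝ) * r i| ≤ δ := by
        rw [abs_sub_comm]; linarith [le_of_lt this]
      nlinarith
    have hb := norm_le_of_coord (z - (y + l • r)) (by positivity) hco
    have hkey : (n:ℝ) * ((m:ℝ) * δ) = ε * n / (n+1) := by
      rw [hδdef]; field_simp
    have : (n:ℝ) * ((m:ℝ) * δ) < ε := by
      rw [hkey, div_lt_iff₀ (by positivity : (0:ℝ) < (n:ℝ)+1)]
      nlinarith [Nat.cast_nonneg (α := ℝ) n]
    linarith
end
end

section
/- Let B ⊆ ℝⁿ be an S-free convex set such that B ∩ conv(S) has nonempty interior. Then for every vector r in rec(B) ∩ rec(conv(S)), the set B + span{r} = {b + λr : b ∈ B, λ ∈ ℝ} is S-free. -/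
open scoped BigOperators Pointwise

noncomputable section

private lemma dot_add_right {n : ℕ} (a x y : E n) : dot a (x + y) = dot a x + dot a y := by
  simp [dot, PiLp.add_apply, mul_add, Finset.sum_add_distrib]

lemma dot_smul_right {n : ℕ} (a : E n) (c : ℝ) (x : E n) : dot a (c • x) = c * dot a x := by
  simp only [dot, PiLp.smul_apply, smul_eq_mul, Finset.mul_sum]
  exact Finset.sum_congr rfl fun i _ => by ring

lemma dot_sub_right {n : ℕ} (a x y : E n) : dot a (x - y) = dot a x - dot a y := by
  simp [dot, PiLp.sub_apply, mul_sub, Finset.sum_sub_distrib]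

lemma abs_dot_le {n : ℕ} (a e : E n) (η : ℝ) (hη : 0 ≤ η) (h : ∀ j, |e j| ≤ η) :
    |dot a e| ≤ (∑ j, |a j|) * η := by
  calc |dot a e| ≤ ∑ j, |a j * e j| := Finset.abs_sum_le_sum_abs _ _
    _ = ∑ j, |a j| * |e j| := by simp [abs_mul]
    _ ≤ ∑ j, |a j| * η := Finset.sum_le_sum fun j _ => mul_le_mul_of_nonneg_left (h j) (abs_nonneg _)
    _ = (∑ j, |a j|) * η := by rw [Finset.sum_mul]

lemma norm_le_of_coord_s5 {n : ℕ} (e : E n) (η : ℝ) (hη : 0 ≤ η) (h : ∀ j, |e j| ≤ η) :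
    ‖e‖ ≤ (n + 1) * η := by
  have h2 : ∑ j, ‖e j‖ ^ 2 ≤ ((n + 1) * η) ^ 2 := by
    calc ∑ j, ‖e j‖ ^ 2 ≤ ∑ _j : Fin n, η ^ 2 := by
          refine Finset.sum_le_sum fun j _ => ?_
          have := h j
          have : ‖e j‖ ≤ η := by rwa [Real.norm_eq_abs]
          nlinarith [norm_nonneg (e j)]
      _ = n * η ^ 2 := by simp [mul_comm]
      _ ≤ ((n + 1) * η) ^ 2 := by nlinarith [sq_nonneg η, Nat.cast_nonneg (α := ℝ) n]
  rw [EuclideanSpace.norm_eq]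
  calc Real.sqrt (∑ j, ‖e j‖ ^ 2) ≤ Real.sqrt (((n + 1) * η) ^ 2) := Real.sqrt_le_sqrt h2
    _ = (n + 1) * η := Real.sqrt_sq (by positivity)

private lemma exists_int_approx {n : ℕ} (r : Fin n → ℝ) {η : ℝ} (hη : 0 < η) (N : ℕ) (hN : 0 < N) :
    ∃ (t : ℕ) (v : Fin n → ℤ), N ≤ t ∧ ∀ j, |(t : ℝ) * r j - (v j : ℝ)| < η := by
  classical
  set M := ⌈1/η⌉₊ with hM
  have hM1 : (1:ℝ)/η ≤ M := Nat.le_ceil _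
  have key : ∀ x : ℝ, (⌊Int.fract x / η⌋).toNat < M + 1 := by
    intro x
    have h0 : 0 ≤ Int.fract x := Int.fract_nonneg x
    have h1 : Int.fract x < 1 := Int.fract_lt_one x
    have hlt : Int.fract x / η < (M : ℝ) + 1 := by
      have h2 : Int.fract x / η < 1 / η := (div_lt_div_iff_of_pos_right hη).mpr h1
      linarith
    have : ⌊Int.fract x / η⌋ < (M : ℤ) + 1 := by
      apply Int.floor_lt.mpr; push_cast; exact hlt
    omega
  obtain ⟨k₁, k₂, hne, hfeq⟩ := Finite.exists_ne_map_eq_of_infinite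
    (fun k => fun j : Fin n =>
      (⟨(⌊Int.fract ((((k+1) * N : ℕ) : ℝ) * r j) / η⌋).toNat, key _⟩ : Fin (M + 1)))
  obtain ⟨a, c, hac, heq⟩ : ∃ a c : ℕ, a < c ∧
      (fun j : Fin n =>
        (⟨(⌊Int.fract ((((a+1) * N : ℕ) : ℝ) * r j) / η⌋).toNat, key _⟩ : Fin (M + 1)))
      = (fun j : Fin n =>
        (⟨(⌊Int.fract ((((c+1) * N : ℕ) : ℝ) * r j) / η⌋).toNat, key _⟩ : Fin (M + 1))) := by
    rcases lt_or_gt_of_ne hne with h | h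
    exacts [⟨k₁, k₂, h, hfeq⟩, ⟨k₂, k₁, h, hfeq.symm⟩]
  refine ⟨(c - a) * N, fun j => ⌊(((c+1) * N : ℕ) : ℝ) * r j⌋ - ⌊(((a+1) * N : ℕ) : ℝ) * r j⌋,
    Nat.le_mul_of_pos_left N (by omega), ?_⟩
  intro j
  have heqj := congrFun heq j
  simp only [Fin.mk.injEq] at heqj
  have hfl : ⌊Int.fract ((((a+1) * N : ℕ) : ℝ) * r j) / η⌋
      = ⌊Int.fract ((((c+1) * N : ℕ) : ℝ) * r j) / η⌋ := by
    have n1 : 0 ≤ ⌊Int.fract ((((a+1) * N : ℕ) : ℝ) * r j) / η⌋ :=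
      Int.floor_nonneg.mpr (div_nonneg (Int.fract_nonneg _) hη.le)
    have n2 : 0 ≤ ⌊Int.fract ((((c+1) * N : ℕ) : ℝ) * r j) / η⌋ :=
      Int.floor_nonneg.mpr (div_nonneg (Int.fract_nonneg _) hη.le)
    omega
  have habs : |Int.fract ((((c+1) * N : ℕ) : ℝ) * r j)
      - Int.fract ((((a+1) * N : ℕ) : ℝ) * r j)| < η := by
    have h1 : |Int.fract ((((c+1) * N : ℕ) : ℝ) * r j) / η
        - Int.fract ((((a+1) * N : ℕ) : ℝ) * r j) / η| < 1 :=
      Int.abs_sub_lt_one_of_floor_eq_floor hfl.symm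
    rw [div_sub_div_same, abs_div, abs_of_pos hη, div_lt_one hη] at h1
    exact h1
  have hcast : (((c - a) * N : ℕ) : ℝ) * r j
      - ((⌊(((c+1) * N : ℕ) : ℝ) * r j⌋ - ⌊(((a+1) * N : ℕ) : ℝ) * r j⌋ : ℤ) : ℝ)
      = Int.fract ((((c+1) * N : ℕ) : ℝ) * r j) - Int.fract ((((a+1) * N : ℕ) : ℝ) * r j) := by
    have hle : (a+1) * N ≤ (c+1) * N := Nat.mul_le_mul_right N (by omega)
    have hsub : ((c - a) * N : ℕ) = ((c+1) * N : ℕ) - ((a+1) * N : ℕ) := by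
      rw [← Nat.sub_mul]
      congr 1
      omega
    rw [hsub, Nat.cast_sub hle]
    rw [← Int.self_sub_floor, ← Int.self_sub_floor]
    push_cast
    ring
  rw [show (fun j => ⌊(((c+1) * N : ℕ) : ℝ) * r j⌋ - ⌊(((a+1) * N : ℕ) : ℝ) * r j⌋) j
    = ⌊(((c+1) * N : ℕ) : ℝ) * r j⌋ - ⌊(((a+1) * N : ℕ) : ℝ) * r j⌋ from rfl]
  rw [hcast]
  exact habs

private lemma rat_dot_nonpos {n : ℕ} (a : E n) (q : Fin n → ℚ) (hq : ∀ j, a j = (q j : ℝ))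
    (v : Fin n → ℤ)
    (h : dot a (WithLp.toLp 2 (fun j => (v j : ℝ))) < 1 / ((∏ j, (q j).den : ℕ) : ℝ)) :
    dot a (WithLp.toLp 2 (fun j => (v j : ℝ))) ≤ 0 := by
  classical
  set D : ℕ := ∏ j, (q j).den with hD
  have hDpos : 0 < D := Finset.prod_pos fun j _ => (q j).pos
  set Q : ℚ := ∑ j, q j * v j with hQ
  have hdq : dot a (WithLp.toLp 2 (fun j => (v j : ℝ))) = (Q : ℝ) := by
    simp only [dot, hQ, PiLp.toLp_apply]
    push_cast
    exact Finset.sum_congr rfl fun j _ => by rw [hq j]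
  -- D * Q is an integer
  have hDQ : ∃ K : ℤ, (D : ℚ) * Q = (K : ℚ) := by
    have hterm : ∀ j : Fin n, ∃ K : ℤ, (D : ℚ) * (q j * v j) = (K : ℚ) := by
      intro j
      obtain ⟨s, hs⟩ := Finset.dvd_prod_of_mem (fun j => (q j).den) (Finset.mem_univ j)
      refine ⟨s * (q j).num * v j, ?_⟩
      rw [hD, hs]
      push_cast
      rw [show ((q j).den : ℚ) * s * (q j * v j) = (s : ℚ) * ((q j * (q j).den)) * v j by ring,
        Rat.mul_den_eq_num]
    choose K hK using hterm
    refine ⟨∑ j, K j, ?_⟩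
    rw [hQ, Finset.mul_sum]
    push_cast
    exact Finset.sum_congr rfl fun j _ => hK j
  obtain ⟨K, hK⟩ := hDQ
  rw [hdq] at h ⊢
  have hQlt : Q < 1 / (D : ℚ) := by
    have := h
    rw [show ((D : ℕ) : ℝ) = ((D : ℚ) : ℝ) by push_cast; rfl] at this
    rw [show (1 : ℝ) / ((D : ℚ) : ℝ) = (((1 / D : ℚ)) : ℝ) by push_cast; rfl] at this
    exact_mod_cast this
  have hK1 : (K : ℚ) < 1 := by
    rw [← hK]
    have hDq : (0 : ℚ) < (D : ℚ) := by exact_mod_cast hDpos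
    calc (D : ℚ) * Q < (D : ℚ) * (1 / D) := by
          exact mul_lt_mul_of_pos_left hQlt hDq
      _ = 1 := by field_simp
  have hK0 : K ≤ 0 := by exact_mod_cast Int.lt_add_one_iff.mp (by exact_mod_cast hK1 : K < 1)
  have hQ0 : Q ≤ 0 := by
    have hDq : (0 : ℚ) < (D : ℚ) := by exact_mod_cast hDpos
    nlinarith [hK, (by exact_mod_cast hK0 : (K : ℚ) ≤ 0)]
  exact_mod_cast hQ0

set_option maxHeartbeats 1000000 in
/-- If B is an S-free convex set with int(B ∩ conv S) ≠ ∅, then for every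
r ∈ rec(B) ∩ rec(conv S), the set B + span{r} is S-free. -/
theorem stmt_5 {n : ℕ} (S : Set (E n)) (hS : IsIntPtsOfRatPolyhedron S)
    (hdim : FullDimSet S) (B : Set (E n)) (hconv : Convex ℝ B) (hfree : SFree S B)
    (hne : (interior (B ∩ convexHull ℝ S)).Nonempty)
    (r : E n) (hr : r ∈ recCone B ∩ recCone (convexHull ℝ S)) :
    SFree S {x : E n | ∃ b ∈ B, ∃ t : ℝ, x = b + t • r} := by
  classical
  intro y hyT hyS
  obtain ⟨m, A, b, hA, hb, hSeq⟩ := hS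
  have hrB : r ∈ recCone B := hr.1
  have hrS : r ∈ recCone (convexHull ℝ S) := hr.2
  -- S ⊆ P and conv S ⊆ P
  have hPconv : Convex ℝ {x : E n | ∀ i, dot (A i) x ≤ b i} := by
    intro u hu w hw α β hα hβ hαβ i
    have h1 := hu i
    have h2 := hw i
    rw [dot_add_right, dot_smul_right, dot_smul_right]
    have h3 := mul_le_mul_of_nonneg_left h1 hα
    have h4 := mul_le_mul_of_nonneg_left h2 hβ
    have h5 : α * b i + β * b i = b i := by rw [← add_mul, hαβ, one_mul]
    linarith
  have hSP : S ⊆ {x : E n | ∀ i, dot (A i) x ≤ b i} := by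
    intro s hs; rw [hSeq] at hs; exact hs.2
  have hhullP : convexHull ℝ S ⊆ {x : E n | ∀ i, dot (A i) x ≤ b i} :=
    convexHull_min hSP hPconv
  have hyS' := hyS
  rw [hSeq] at hyS'
  obtain ⟨hyInt, hyP⟩ := hyS'
  have hyconv : y ∈ convexHull ℝ S := subset_convexHull ℝ S hyS
  -- each dot (A i) r ≤ 0
  have hd : ∀ i, dot (A i) r ≤ 0 := by
    intro i
    by_contra hpos
    push_neg at hpos
    have hbi : dot (A i) y ≤ b i := hyP i
    set t : ℝ := (b i - dot (A i) y + 1) / dot (A i) r with ht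
    have ht0 : 0 ≤ t := div_nonneg (by linarith) hpos.le
    have hmem := hhullP (hrS y hyconv t ht0) i
    rw [dot_add_right, dot_smul_right] at hmem
    rw [ht, div_mul_cancel₀ _ (ne_of_gt hpos)] at hmem
    linarith
  -- interior point z of B and lam with y = z + lam • r
  obtain ⟨w0, hw0⟩ := hne
  have hw0B : w0 ∈ interior B := interior_mono Set.inter_subset_left hw0
  rw [mem_interior_iff_mem_nhds, Metric.mem_nhds_iff] at hyT
  obtain ⟨ρ, hρ, hball⟩ := hyT
  set s : ℝ := ρ / (2 * (‖y - w0‖ + 1)) with hs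
  have hs0 : 0 < s := by positivity
  have hps : y + s • (y - w0) ∈ {x : E n | ∃ b ∈ B, ∃ t : ℝ, x = b + t • r} := by
    apply hball
    rw [Metric.mem_ball, dist_eq_norm]
    have h1 : y + s • (y - w0) - y = s • (y - w0) := by module
    rw [h1, norm_smul, Real.norm_eq_abs, abs_of_pos hs0]
    rw [hs]
    rw [div_mul_eq_mul_div]
    rw [div_lt_iff₀ (by positivity)]
    nlinarith [norm_nonneg (y - w0)]
  obtain ⟨b', hb', t', ht'⟩ := hps
  have h1s : (0:ℝ) < 1 + s := by linarith
  set z : E n := (s/(1+s)) • w0 + (1/(1+s)) • b' with hz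
  set lam : ℝ := t' / (1 + s) with hlam
  have hzB : z ∈ interior B := by
    apply Convex.combo_interior_closure_mem_interior hconv hw0B
      (subset_closure hb') (by positivity) (by positivity)
    field_simp
    ring
  have hyz : y = z + lam • r := by
    have h2 : (1 + s) • y = b' + t' • r + s • w0 := by
      have : y + s • (y - w0) = b' + t' • r := ht'
      rw [show (1 + s) • y = (y + s • (y - w0)) + s • w0 by module, this]
    have h3 : y = (1/(1+s)) • ((1 + s) • y) := by
      rw [smul_smul]
      rw [one_div_mul_cancel (ne_of_gt h1s)]
      rw [one_smul]
    rw [h3, h2, hz, hlam]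
    match_scalars <;> field_simp
  -- ball around z and the tube
  rw [mem_interior_iff_mem_nhds, Metric.mem_nhds_iff] at hzB
  obtain ⟨ε, hε, hballz⟩ := hzB
  have tube : ∀ t : ℝ, 0 ≤ t → Metric.ball (z + t • r) ε ⊆ interior B := by
    intro t ht
    apply interior_maximal _ Metric.isOpen_ball
    intro u hu
    have h1 : u - t • r ∈ Metric.ball z ε := by
      rw [Metric.mem_ball, dist_eq_norm] at hu ⊢
      rw [show u - t • r - z = u - (z + t • r) by module]
      exact hu
    have h2 := hrB _ (hballz h1) t ht
    rw [show u - t • r + t • r = u by module] at h2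
    exact h2
  -- rational data
  choose q hq using hA
  set D : Fin m → ℕ := fun i => ∏ j, (q i j).den with hD
  have hDpos : ∀ i, 0 < D i := fun i => Finset.prod_pos fun j _ => (q i j).pos
  set C : Fin m → ℝ := fun i => ∑ j, |A i j| with hC
  have hCpos : ∀ i, 0 ≤ C i := fun i => Finset.sum_nonneg fun j _ => abs_nonneg _
  -- choose η
  set cc : Fin m → ℝ := fun i => (1 / (D i : ℝ)) / (C i + 1) with hcc
  have hccpos : ∀ i, 0 < cc i := by
    intro i
    have h1 : (0:ℝ) < D i := by exact_mod_cast hDpos i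
    have h2 : (0:ℝ) < C i + 1 := by linarith [hCpos i]
    positivity
  obtain ⟨η, hηpos, hηε, hηcc⟩ : ∃ η : ℝ, 0 < η ∧ η ≤ ε / (n + 2) ∧ ∀ i, η ≤ cc i := by
    have hFne : (insert (ε / (n + 2 : ℝ)) (Finset.image cc Finset.univ)).Nonempty :=
      ⟨_, Finset.mem_insert_self _ _⟩
    refine ⟨_, ?_, Finset.min'_le _ _ (Finset.mem_insert_self _ _), fun i =>
      Finset.min'_le _ _ (Finset.mem_insert_of_mem (Finset.mem_image_of_mem cc
        (Finset.mem_univ i)))⟩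
    refine (Finset.lt_min'_iff _ _).mpr ?_
    intro x hx
    rcases Finset.mem_insert.mp hx with h | h
    · rw [h]; positivity
    · obtain ⟨i, _, hi⟩ := Finset.mem_image.mp h
      rw [← hi]; exact hccpos i
  -- choose N
  set g : Fin m → ℝ := fun i =>
    if dot (A i) r < 0 then (C i * η) / (-(dot (A i) r)) else 0 with hg
  set G : ℝ := (insert (-lam) (Finset.image g Finset.univ)).max'
    ⟨_, Finset.mem_insert_self _ _⟩ with hG
  have hGlam : -lam ≤ G := Finset.le_max' _ _ (Finset.mem_insert_self _ _)
  have hGg : ∀ i, g i ≤ G := fun i =>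
    Finset.le_max' _ _ (Finset.mem_insert_of_mem (Finset.mem_image_of_mem g (Finset.mem_univ i)))
  set N : ℕ := ⌈G⌉₊ + 1 with hN
  have hN0 : 0 < N := Nat.succ_pos _
  have hNG : G ≤ (N : ℝ) := by
    have := Nat.le_ceil G
    push_cast [hN]
    linarith
  -- Dirichlet
  obtain ⟨t, v, htN, hv⟩ := exists_int_approx (fun j => r j) hηpos N hN0
  have htNR : (N : ℝ) ≤ (t : ℝ) := by exact_mod_cast htN
  set vE : E n := (WithLp.toLp 2 (fun j => (v j : ℝ)) : E n) with hvE
  have hcoord : ∀ j, |(vE - (t : ℝ) • r) j| ≤ η := by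
    intro j
    have h1 : (vE - (t : ℝ) • r) j = (v j : ℝ) - (t : ℝ) * r j := by
      simp [hvE, PiLp.sub_apply, PiLp.smul_apply]
    rw [h1, abs_sub_comm]
    exact (hv j).le
  -- the integral point p
  set p : E n := y + vE with hp
  have hsplit : ∀ i, dot (A i) vE = (t : ℝ) * dot (A i) r + dot (A i) (vE - (t : ℝ) • r) := by
    intro i
    rw [dot_sub_right, dot_smul_right]
    ring
  have herr : ∀ i, |dot (A i) (vE - (t : ℝ) • r)| ≤ C i * η :=
    fun i => abs_dot_le (A i) _ η hηpos.le hcoord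
  have hdotv : ∀ i, dot (A i) vE ≤ 0 := by
    intro i
    rcases (hd i).lt_or_eq with hneg | hzero
    · -- strictly negative case
      have h1 : C i * η ≤ (N : ℝ) * (-(dot (A i) r)) := by
        have h2 : g i = (C i * η) / (-(dot (A i) r)) := by rw [hg]; simp [hneg]
        have h3 : (C i * η) / (-(dot (A i) r)) ≤ (N : ℝ) := le_trans (h2 ▸ hGg i) hNG
        rw [div_le_iff₀ (by linarith)] at h3
        linarith
      have h4 : (t : ℝ) * dot (A i) r ≤ (N : ℝ) * dot (A i) r :=
        mul_le_mul_of_nonpos_right htNR hneg.le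
      have h5 := (abs_le.mp (herr i)).2
      rw [hsplit i]
      nlinarith
    · -- zero case: use rationality
      have h5 := (abs_le.mp (herr i)).2
      have h6 : dot (A i) vE < 1 / ((D i : ℕ) : ℝ) := by
        rw [hsplit i, hzero, mul_zero, zero_add]
        have h7 : C i * η < 1 / ((D i : ℕ) : ℝ) := by
          have h8 := hηcc i
          rw [hcc] at h8
          have h9 : (0:ℝ) < 1 / (D i : ℝ) := by
            have : (0:ℝ) < D i := by exact_mod_cast hDpos i
            positivity
          have h10 : (0:ℝ) < C i + 1 := by linarith [hCpos i]
          calc C i * η ≤ C i * ((1 / (D i : ℝ)) / (C i + 1)) :=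
                mul_le_mul_of_nonneg_left h8 (hCpos i)
            _ < 1 / (D i : ℝ) := by
                rw [mul_div_assoc']
                rw [div_lt_iff₀ h10]
                nlinarith [hCpos i]
        nlinarith
      exact rat_dot_nonpos (A i) (q i) (hq i) v h6
  -- p ∈ S
  have hpS : p ∈ S := by
    rw [hSeq]
    constructor
    · intro j
      obtain ⟨mj, hmj⟩ := hyInt j
      refine ⟨mj + v j, ?_⟩
      rw [hp]
      rw [PiLp.add_apply, hmj]
      push_cast
      rfl
    · intro i
      rw [hp, dot_add_right]
      have := hdotv i
      have := hyP i
      linarith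
  -- p ∈ interior B
  have hpB : p ∈ interior B := by
    have hlt : 0 ≤ lam + (t : ℝ) := by linarith
    apply tube (lam + (t : ℝ)) hlt
    rw [Metric.mem_ball, dist_eq_norm]
    have h1 : p - (z + (lam + (t : ℝ)) • r) = vE - (t : ℝ) • r := by
      rw [hp, hyz]
      module
    rw [h1]
    have h2 : ‖vE - (t : ℝ) • r‖ ≤ (n + 1) * η := norm_le_of_coord_s5 _ η hηpos.le hcoord
    have h3 : (n + 1 : ℝ) * η < ε := by
      have h4 : ((n : ℝ) + 1) * η ≤ ((n : ℝ) + 1) * (ε / (n + 2)) :=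
        mul_le_mul_of_nonneg_left hηε (by positivity)
      have h5 : ((n : ℝ) + 1) * (ε / (n + 2)) < ε := by
        rw [mul_div_assoc']
        rw [div_lt_iff₀ (by positivity)]
        nlinarith [Nat.cast_nonneg (α := ℝ) n]
      linarith
    linarith
  exact hfree p hpB hpS
end
end

section
/- Let ψ : ℝⁿ → ℝ be a sublinear function such that the set B_ψ = {x ∈ ℝⁿ : ψ(x − f) ≤ 1} is S-free. Then ψ is a valid function, i.e., for every finitely supported function s : ℝⁿ → ℝ≥0 with f + Σ_r r·s_r ∈ S, one has Σ_r ψ(r)·s_r ≥ 1. -/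
open scoped BigOperators Pointwise

noncomputable section

/-- A sublinear function ψ whose set B_ψ = {x | ψ(x-f) ≤ 1} is S-free is a
valid function. -/
theorem stmt_10 {n : ℕ} (S : Set (E n)) (hS : IsIntPtsOfRatPolyhedron S)
    (hdim : FullDimSet S) (f : E n) (hf : f ∈ convexHull ℝ S) (hfi : ¬ IsIntPt f)
    (ψ : E n → ℝ) (hsub : Sublinear ψ)
    (hfree : SFree S {x : E n | ψ (x - f) ≤ 1}) :
    ValidFn S f ψ := by
  classical
  intro s hs hmem
  by_contra hlt
  push_neg at hlt
  have hψ0 : ψ 0 = 0 := by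
    have := hsub.1 0 le_rfl 0
    simpa using this
  have hconv : ConvexOn ℝ (Set.univ : Set (E n)) ψ := by
    refine ⟨convex_univ, fun x _ y _ a b ha hb hab => ?_⟩
    calc ψ (a • x + b • y) ≤ ψ (a • x) + ψ (b • y) := hsub.2 _ _
      _ = a * ψ x + b * ψ y := by rw [hsub.1 a ha, hsub.1 b hb]
      _ = a • ψ x + b • ψ y := rfl
  have hcont : Continuous ψ := by
    have := hconv.continuousOn isOpen_univ
    rw [← continuousOn_univ]
    exact this
  have hsumle : ∀ (t : Finset (E n)) (g : E n → E n),
      ψ (∑ r ∈ t, g r) ≤ ∑ r ∈ t, ψ (g r) := by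
    intro t g
    induction t using Finset.induction with
    | empty => simp [hψ0]
    | insert _ _ hx ih =>
      rename_i a t'
      rw [Finset.sum_insert hx, Finset.sum_insert hx]
      exact le_trans (hsub.2 _ _) (by linarith)
  have key : ψ (s.sum fun r c => c • r) ≤ s.sum fun r c => ψ r * c := by
    rw [Finsupp.sum, Finsupp.sum]
    refine le_trans (hsumle _ _) (Finset.sum_le_sum fun r _ => ?_)
    rw [hsub.1 (s r) (hs r) r, mul_comm]
  set x := f + s.sum fun r c => c • r with hx
  have hxlt : ψ (x - f) < 1 := by
    have : x - f = s.sum fun r c => c • r := by simp [hx]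
    rw [this]
    exact lt_of_le_of_lt key hlt
  have hopen : IsOpen {y : E n | ψ (y - f) < 1} :=
    isOpen_lt (hcont.comp (continuous_id.sub continuous_const)) continuous_const
  have hsub' : {y : E n | ψ (y - f) < 1} ⊆ {y : E n | ψ (y - f) ≤ 1} :=
    fun y (hy : ψ (y - f) < 1) => le_of_lt hy
  have hxint : x ∈ interior {y : E n | ψ (y - f) ≤ 1} :=
    interior_maximal hsub' hopen hxlt
  exact hfree x hxint hmem
end
end

section
/- Every valid function ψ : ℝⁿ → ℝ is dominated by a sublinear valid function, i.e., there exists a valid function ψ̄ : ℝⁿ → ℝ that is positively homogeneous and subadditive and satisfies ψ̄(r) ≤ ψ(r) for all r ∈ ℝⁿ. -/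
open scoped BigOperators Pointwise

noncomputable section

namespace Stmt11Aux

/-- The "point" linear map: `s ↦ ∑ c • v`. -/
def Pmap (n : ℕ) : ((E n) →₀ ℝ) →ₗ[ℝ] E n := Finsupp.linearCombination ℝ id

/-- The "value" linear map: `s ↦ ∑ ψ(v) * c`. -/
def Vmap {n : ℕ} (ψ : E n → ℝ) : ((E n) →₀ ℝ) →ₗ[ℝ] ℝ := Finsupp.linearCombination ℝ ψ

lemma Pmap_apply {n : ℕ} (s : (E n) →₀ ℝ) : Pmap n s = s.sum fun r c => c • r := by
  simp [Pmap, Finsupp.linearCombination_apply]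

lemma Vmap_apply {n : ℕ} (ψ : E n → ℝ) (s : (E n) →₀ ℝ) :
    Vmap ψ s = s.sum fun r c => ψ r * c := by
  rw [Vmap, Finsupp.linearCombination_apply]
  exact Finsupp.sum_congr fun r _ => by rw [smul_eq_mul, mul_comm]

lemma Pmap_single {n : ℕ} (r : E n) (c : ℝ) : Pmap n (Finsupp.single r c) = c • r := by
  simp [Pmap]

lemma Vmap_single {n : ℕ} (ψ : E n → ℝ) (r : E n) (c : ℝ) :
    Vmap ψ (Finsupp.single r c) = c * ψ r := by
  simp [Vmap]

lemma single_nonneg' {n : ℕ} (r : E n) (c : ℝ) (hc : 0 ≤ c) (v : E n) :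
    0 ≤ (Finsupp.single r c) v := by
  classical
  rw [Finsupp.single_apply]; split
  · exact hc
  · exact le_rfl

/-- The set of values of nonnegative decompositions of `r`. -/
def Dset {n : ℕ} (ψ : E n → ℝ) (r : E n) : Set ℝ :=
  {V | ∃ s : (E n) →₀ ℝ, (∀ v, 0 ≤ s v) ∧ Pmap n s = r ∧ Vmap ψ s = V}

lemma mem_Dset_self {n : ℕ} (ψ : E n → ℝ) (r : E n) : ψ r ∈ Dset ψ r :=
  ⟨Finsupp.single r 1, single_nonneg' r 1 zero_le_one, by simp [Pmap_single],
    by simp [Vmap_single]⟩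

lemma Dset_add {n : ℕ} (ψ : E n → ℝ) {r r' : E n} {V V' : ℝ}
    (h : V ∈ Dset ψ r) (h' : V' ∈ Dset ψ r') : V + V' ∈ Dset ψ (r + r') := by
  obtain ⟨s, hs, hp, hV⟩ := h
  obtain ⟨s', hs', hp', hV'⟩ := h'
  exact ⟨s + s', fun v => add_nonneg (hs v) (hs' v),
    by rw [map_add, hp, hp'], by rw [map_add, hV, hV']⟩

lemma Dset_smul {n : ℕ} (ψ : E n → ℝ) {r : E n} {V : ℝ} (t : ℝ) (ht : 0 ≤ t)
    (h : V ∈ Dset ψ r) : t * V ∈ Dset ψ (t • r) := by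
  obtain ⟨s, hs, hp, hV⟩ := h
  refine ⟨t • s, fun v => ?_, by rw [map_smul, hp], by rw [map_smul, hV, smul_eq_mul]⟩
  rw [Finsupp.smul_apply, smul_eq_mul]
  exact mul_nonneg ht (hs v)

end Stmt11Aux

open Stmt11Aux in
/-- Every valid function is dominated by a sublinear valid function. -/
theorem stmt_11 {n : ℕ} (S : Set (E n)) (hS : IsIntPtsOfRatPolyhedron S)
    (hdim : FullDimSet S) (f : E n) (hf : f ∈ convexHull ℝ S) (hfi : ¬ IsIntPt f)
    (ψ : E n → ℝ) (hv : ValidFn S f ψ) :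
    ∃ ψ' : E n → ℝ, ValidFn S f ψ' ∧ Sublinear ψ' ∧ ∀ r, ψ' r ≤ ψ r := by
  classical
  -- a point of S
  obtain ⟨p, hp, -⟩ := hdim
  set x0 : E n := p 0 with hx0def
  have hx0 : x0 ∈ S := hp 0
  -- validity, restated via Vmap / Pmap
  have hv' : ∀ s : (E n) →₀ ℝ, (∀ v, 0 ≤ s v) → f + Pmap n s ∈ S → 1 ≤ Vmap ψ s := by
    intro s hs hmem
    rw [Vmap_apply]
    exact hv s hs (by rwa [Pmap_apply] at hmem)
  -- Key lemma: any nonnegative decomposition of 0 has nonnegative value.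
  have key0 : ∀ s : (E n) →₀ ℝ, (∀ v, 0 ≤ s v) → Pmap n s = 0 → 0 ≤ Vmap ψ s := by
    intro s hs hp0
    by_contra hneg
    push_neg at hneg
    set V := Vmap ψ s with hVdef
    set t : ℝ := max (ψ (x0 - f) / (-V)) 0 with htdef
    have ht : 0 ≤ t := le_max_right _ _
    have hcomb := hv' (Finsupp.single (x0 - f) 1 + t • s)
      (fun v => add_nonneg (single_nonneg' _ _ zero_le_one v)
        (by rw [Finsupp.smul_apply, smul_eq_mul]; exact mul_nonneg ht (hs v)))
      (by
        rw [map_add, map_smul, hp0, Pmap_single, smul_zero, add_zero, one_smul]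
        simpa using hx0)
    rw [map_add, map_smul, Vmap_single, one_mul, smul_eq_mul, ← hVdef] at hcomb
    -- hcomb : 1 ≤ ψ (x0 - f) + t * V
    have hVpos : 0 < -V := by linarith
    have h1 : ψ (x0 - f) / (-V) ≤ t := le_max_left _ _
    have h2 : ψ (x0 - f) ≤ t * (-V) := by
      rw [div_le_iff₀ hVpos] at h1; linarith
    nlinarith
  -- Each Dset is nonempty and bounded below.
  have hne : ∀ r : E n, (Dset ψ r).Nonempty := fun r => ⟨ψ r, mem_Dset_self ψ r⟩
  have hbdd : ∀ r : E n, BddBelow (Dset ψ r) := by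
    intro r
    refine ⟨-ψ (-r), fun V hV => ?_⟩
    have hmem : V + ψ (-r) ∈ Dset ψ (r + -r) := Dset_add ψ hV (mem_Dset_self ψ (-r))
    rw [add_neg_cancel] at hmem
    obtain ⟨s, hs, hp0, hVs⟩ := hmem
    have := key0 s hs hp0
    rw [hVs] at this
    linarith
  -- The dominating function.
  set ψ' : E n → ℝ := fun r => sInf (Dset ψ r) with hψ'def
  have hle : ∀ r, ψ' r ≤ ψ r := fun r => csInf_le (hbdd r) (mem_Dset_self ψ r)
  have hle_mem : ∀ r, ∀ V ∈ Dset ψ r, ψ' r ≤ V := fun r V hV => csInf_le (hbdd r) hV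
  -- ψ' 0 = 0
  have hzero : ψ' 0 = 0 := by
    apply le_antisymm
    · refine csInf_le (hbdd 0) ⟨0, fun v => le_refl 0, by simp, by simp⟩
    · refine le_csInf (hne 0) fun V hV => ?_
      obtain ⟨s, hs, hp0, hVs⟩ := hV
      rw [← hVs]; exact key0 s hs hp0
  -- one-sided homogeneity for t > 0
  have hhom_le : ∀ t : ℝ, 0 < t → ∀ r, ψ' (t • r) ≤ t * ψ' r := by
    intro t ht r
    have : ψ' (t • r) / t ≤ ψ' r := by
      refine le_csInf (hne r) fun V hV => ?_
      rw [div_le_iff₀ ht, mul_comm]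
      exact hle_mem _ _ (Dset_smul ψ t ht.le hV)
    calc ψ' (t • r) = t * (ψ' (t • r) / t) := by field_simp
      _ ≤ t * ψ' r := by exact mul_le_mul_of_nonneg_left this ht.le
  have hhom : ∀ t : ℝ, 0 ≤ t → ∀ r, ψ' (t • r) = t * ψ' r := by
    intro t ht r
    rcases eq_or_lt_of_le ht with h | h
    · rw [← h, zero_smul, zero_mul, hzero]
    · refine le_antisymm (hhom_le t h r) ?_
      have := hhom_le t⁻¹ (inv_pos.mpr h) (t • r)
      rw [smul_smul, inv_mul_cancel₀ h.ne', one_smul] at this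
      calc t * ψ' r ≤ t * (t⁻¹ * ψ' (t • r)) := mul_le_mul_of_nonneg_left this ht
        _ = ψ' (t • r) := by field_simp
  -- subadditivity
  have hsub : ∀ r r', ψ' (r + r') ≤ ψ' r + ψ' r' := by
    intro r r'
    have step1 : ∀ V ∈ Dset ψ r, ψ' (r + r') - V ≤ ψ' r' := by
      intro V hV
      refine le_csInf (hne r') fun V' hV' => ?_
      have := hle_mem _ _ (Dset_add ψ hV hV')
      linarith
    have step2 : ψ' (r + r') - ψ' r' ≤ ψ' r := by
      refine le_csInf (hne r) fun V hV => ?_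
      have := step1 V hV
      linarith
    linarith
  -- validity of ψ'
  have hvalid : ValidFn S f ψ' := by
    intro s hs hmem
    refine le_of_forall_pos_le_add fun δ hδ => ?_
    -- total mass
    set M : ℝ := ∑ r ∈ s.support, s r with hMdef
    have hM : 0 ≤ M := Finset.sum_nonneg fun r _ => hs r
    set ε : ℝ := δ / (M + 1) with hεdef
    have hε : 0 < ε := div_pos hδ (by linarith)
    -- choose near-optimal decompositions
    have hchoice : ∀ r : E n, ∃ σ : (E n) →₀ ℝ,
        (∀ v, 0 ≤ σ v) ∧ Pmap n σ = r ∧ Vmap ψ σ < ψ' r + ε := by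
      intro r
      obtain ⟨V, hV, hVlt⟩ := exists_lt_of_csInf_lt (hne r) (lt_add_of_pos_right (ψ' r) hε)
      obtain ⟨σ, hσ, hpσ, hVσ⟩ := hV
      exact ⟨σ, hσ, hpσ, by rw [hVσ]; exact hVlt⟩
    choose σ hσnn hσp hσV using hchoice
    -- combined decomposition
    set T : (E n) →₀ ℝ := ∑ r ∈ s.support, s r • σ r with hTdef
    have hTnn : ∀ v, 0 ≤ T v := by
      intro v
      rw [hTdef, Finsupp.finset_sum_apply]
      exact Finset.sum_nonneg fun r _ => by
        rw [Finsupp.smul_apply, smul_eq_mul]; exact mul_nonneg (hs r) (hσnn r v)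
    have hTP : Pmap n T = Pmap n s := by
      rw [hTdef, map_sum, Pmap_apply s, Finsupp.sum]
      exact Finset.sum_congr rfl fun r _ => by rw [map_smul, hσp r]
    have h1 : 1 ≤ Vmap ψ T := by
      apply hv' T hTnn
      rw [hTP, Pmap_apply]
      exact hmem
    have hVT : Vmap ψ T = ∑ r ∈ s.support, s r * Vmap ψ (σ r) := by
      rw [hTdef, map_sum]
      exact Finset.sum_congr rfl fun r _ => by rw [map_smul, smul_eq_mul]
    have h2 : ∑ r ∈ s.support, s r * Vmap ψ (σ r) ≤
        (∑ r ∈ s.support, s r * ψ' r) + ε * M := by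
      rw [hMdef, Finset.mul_sum, ← Finset.sum_add_distrib]
      refine Finset.sum_le_sum fun r _ => ?_
      have := hσV r
      have := hs r
      nlinarith
    have hεM : ε * M ≤ δ := by
      rw [hεdef, div_mul_eq_mul_div, div_le_iff₀ (by linarith : (0:ℝ) < M + 1)]
      nlinarith
    have h3 : (s.sum fun r c => ψ' r * c) = ∑ r ∈ s.support, s r * ψ' r := by
      rw [Finsupp.sum]
      exact Finset.sum_congr rfl fun r _ => mul_comm _ _
    rw [h3]
    rw [hVT] at h1
    linarith
  exact ⟨ψ', hvalid, ⟨hhom, hsub⟩, hle⟩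
end
end

section
/- Let B be a closed S-free convex set in ℝⁿ with f in its interior, and let K = B − f = {x − f : x ∈ B}. Then ρ_K is a valid function, i.e., for every finitely supported function s : ℝⁿ → ℝ≥0 with f + Σ_r r·s_r ∈ S, one has Σ_r ρ_K(r)·s_r ≥ 1. -/
open scoped BigOperators Pointwise

noncomputable section

lemma dot_eq_inner {n : ℕ} (x y : E n) : dot x y = (inner ℝ x y : ℝ) := by
  simp [dot, PiLp.inner_apply, RCLike.inner_apply, mul_comm]

lemma dot_comm' {n : ℕ} (x y : E n) : dot x y = dot y x := by
  simp [dot, mul_comm]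

/-- If B is a closed S-free convex set with f in its interior and K = B - f,
then ρ_K is a valid function. -/
theorem stmt_14 {n : ℕ} (S : Set (E n)) (hS : IsIntPtsOfRatPolyhedron S)
    (hdim : FullDimSet S) (f : E n) (hf : f ∈ convexHull ℝ S) (hfi : ¬ IsIntPt f)
    (B : Set (E n)) (hcl : IsClosed B) (hconv : Convex ℝ B)
    (hfree : SFree S B) (hfB : f ∈ interior B) :
    ValidFn S f (rho ((fun x => x - f) '' B)) := by
  classical
  obtain ⟨m, A, b, -, -, hSeq⟩ := hS
  intro s hs hmem
  set K : Set (E n) := (fun x => x - f) '' B with hKdef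
  have hKeq : K = (fun x => x + f) ⁻¹' B := by
    ext x
    constructor
    · rintro ⟨y, hy, rfl⟩
      simpa using hy
    · intro hx
      exact ⟨x + f, hx, by simp⟩
  have hKint : interior K = (fun x => x + f) ⁻¹' interior B := by
    rw [hKeq]
    exact ((Homeomorph.addRight f).preimage_interior B).symm
  have hKconv : Convex ℝ K := by
    rw [hKeq]
    intro x hx y hy a c ha hc hac
    simp only [Set.mem_preimage] at *
    have h := hconv hx hy ha hc hac
    have hf' : a • f + c • f = f := by rw [← add_smul, hac, one_smul]
    have heq : a • (x + f) + c • (y + f) = (a • x + c • y) + f := by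
      calc a • (x + f) + c • (y + f) = (a • x + c • y) + (a • f + c • f) := by
            rw [smul_add, smul_add]; abel
        _ = (a • x + c • y) + f := by rw [hf']
    rwa [heq] at h
  have hKcl : IsClosed K := by
    rw [hKeq]
    exact hcl.preimage (continuous_id.add continuous_const)
  have h0 : (0 : E n) ∈ interior K := by
    rw [hKint]
    simpa using hfB
  set z : E n := s.sum fun r c => c • r with hz
  have hzK : z ∉ interior K := by
    intro hzi
    rw [hKint] at hzi
    exact hfree (z + f) hzi (by simpa [add_comm] using hmem)
  obtain ⟨ε, hεpos, hball⟩ := Metric.isOpen_iff.mp isOpen_interior 0 h0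
  -- the scaling factor μ
  set A' : Set ℝ := {u : ℝ | 0 < u ∧ u ≤ 1 ∧ u • z ∈ K} with hA'
  set u0 : ℝ := min 1 (ε / (2 * (‖z‖ + 1))) with hu0
  have hu0pos : 0 < u0 := lt_min one_pos (by positivity)
  have hu0mem : u0 ∈ A' := by
    refine ⟨hu0pos, min_le_left _ _, ?_⟩
    refine interior_subset (hball ?_)
    rw [mem_ball_zero_iff, norm_smul, Real.norm_eq_abs, abs_of_pos hu0pos]
    have h1 : u0 ≤ ε / (2 * (‖z‖ + 1)) := min_le_right _ _
    have hden : (0:ℝ) < 2 * (‖z‖ + 1) := by positivity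
    have key : u0 * (2 * (‖z‖ + 1)) ≤ ε := by
      calc u0 * (2 * (‖z‖ + 1)) ≤ ε / (2 * (‖z‖ + 1)) * (2 * (‖z‖ + 1)) := by
            exact mul_le_mul_of_nonneg_right h1 hden.le
        _ = ε := div_mul_cancel₀ ε hden.ne'
    nlinarith [norm_nonneg z, hu0pos]
  have hA'ne : A'.Nonempty := ⟨u0, hu0mem⟩
  have hbddA : BddAbove A' := ⟨1, fun u hu => hu.2.1⟩
  set μ : ℝ := sSup A' with hμ
  have hμle1 : μ ≤ 1 := csSup_le hA'ne (fun u hu => hu.2.1)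
  have hμpos : 0 < μ := lt_of_lt_of_le hu0pos (le_csSup hbddA hu0mem)
  have hcont : Continuous fun u : ℝ => u • z := continuous_id.smul continuous_const
  have hμK : μ • z ∈ K := by
    have hcl2 : IsClosed {u : ℝ | u • z ∈ K} := hKcl.preimage hcont
    have hmc : μ ∈ closure A' := csSup_mem_closure hA'ne hbddA
    exact closure_minimal (fun u hu => hu.2.2) hcl2 hmc
  set p : E n := μ • z with hp
  have hpint : p ∉ interior K := by
    intro hpi
    rcases eq_or_lt_of_le hμle1 with h1 | h1
    · rw [hp, h1, one_smul] at hpi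
      exact hzK hpi
    · have hmemn : {u : ℝ | u • z ∈ interior K} ∈ nhds μ :=
        (isOpen_interior.preimage hcont).mem_nhds hpi
      obtain ⟨δ, hδ, hball2⟩ := Metric.mem_nhds_iff.mp hmemn
      set u : ℝ := min (μ + δ/2) ((μ + 1)/2) with hu
      have huμ : μ < u := lt_min (by linarith) (by linarith)
      have hu1 : u ≤ 1 := le_trans (min_le_right _ _) (by linarith)
      have huball : u ∈ Metric.ball μ δ := by
        rw [Metric.mem_ball, Real.dist_eq, abs_of_pos (by linarith)]
        have h2 := min_le_left (μ + δ/2) ((μ + 1)/2)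
        have h3 : u ≤ μ + δ/2 := h2
        linarith
      have huA : u ∈ A' := ⟨lt_trans hμpos huμ, hu1, interior_subset (hball2 huball)⟩
      exact absurd (le_csSup hbddA huA) (not_le.mpr huμ)
  -- separation
  obtain ⟨φ, hφ⟩ := geometric_hahn_banach_open_point hKconv.interior isOpen_interior hpint
  set β : ℝ := φ p with hβ
  have hβpos : 0 < β := by
    have := hφ 0 h0
    simpa using this
  have hφK : ∀ r ∈ K, φ r ≤ β := by
    intro r hr
    by_contra hcon
    push_neg at hcon
    have hφrpos : 0 < φ r := lt_trans hβpos hcon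
    set c : ℝ := β / φ r with hc
    have hc1 : c < 1 := (div_lt_one hφrpos).mpr hcon
    have hc0 : 0 < c := div_pos hβpos hφrpos
    set bc : ℝ := (c + 1)/2 with hbc
    have ha0 : (0:ℝ) < 1 - bc := by rw [hbc]; linarith
    have hb0 : (0:ℝ) ≤ bc := by rw [hbc]; linarith
    have hmem2 : (1 - bc) • (0:E n) + bc • r ∈ interior K :=
      hKconv.combo_interior_closure_mem_interior h0 (subset_closure hr) ha0 hb0 (by ring)
    have hlt := hφ _ hmem2
    simp only [smul_zero, zero_add, map_smul, smul_eq_mul] at hlt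
    have hceq : c * φ r = β := div_mul_cancel₀ β hφrpos.ne'
    have hbcgt : c < bc := by rw [hbc]; linarith
    nlinarith
  set y : E n := (InnerProductSpace.toDual ℝ (E n)).symm φ with hy
  have hyv : ∀ v : E n, (inner ℝ y v : ℝ) = φ v := fun v =>
    InnerProductSpace.toDual_symm_apply
  set y' : E n := β⁻¹ • y with hy'
  have hy'p : dot y' p = 1 := by
    rw [dot_eq_inner, hy', real_inner_smul_left, hyv, ← hβ, inv_mul_cancel₀ hβpos.ne']
  have hy'polar : y' ∈ polar K := by
    intro r hr
    rw [dot_eq_inner, hy', real_inner_smul_left, hyv]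
    have h1 := hφK r hr
    calc β⁻¹ * φ r ≤ β⁻¹ * β := mul_le_mul_of_nonneg_left h1 (inv_nonneg.mpr hβpos.le)
      _ = 1 := inv_mul_cancel₀ hβpos.ne'
  have hy'hat : y' ∈ Khat K := ⟨hy'polar, p, hμK, by rw [dot_comm', hy'p]⟩
  -- boundedness of the sets defining rho
  have hbddIm : ∀ r : E n, BddAbove ((fun y => dot y r) '' Khat K) := by
    intro r
    refine ⟨(2/ε) * ‖r‖, ?_⟩
    rintro _ ⟨w, hw, rfl⟩
    have hwnorm : ‖w‖ ≤ 2/ε := by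
      by_cases hw0 : w = 0
      · rw [hw0]; simp; positivity
      · have hnw : (0:ℝ) < ‖w‖ := norm_pos_iff.mpr hw0
        have hq : (ε/(2*‖w‖)) • w ∈ K := by
          refine interior_subset (hball ?_)
          rw [mem_ball_zero_iff, norm_smul, Real.norm_eq_abs, abs_of_pos (by positivity)]
          have : ε/(2*‖w‖) * ‖w‖ = ε/2 := by field_simp
          rw [this]; linarith
        have hle := hw.1 _ hq
        rw [dot_eq_inner, real_inner_smul_right, real_inner_self_eq_norm_sq] at hle
        have h2 : ε/(2*‖w‖) * ‖w‖^2 = ε*‖w‖/2 := by field_simp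
        rw [h2] at hle
        rw [le_div_iff₀ hεpos]
        nlinarith
    calc dot w r = (inner ℝ w r : ℝ) := dot_eq_inner w r
      _ ≤ ‖w‖ * ‖r‖ := real_inner_le_norm w r
      _ ≤ (2/ε) * ‖r‖ := mul_le_mul_of_nonneg_right hwnorm (norm_nonneg r)
  have hrho : ∀ r : E n, dot y' r ≤ rho K r := fun r =>
    le_csSup (hbddIm r) ⟨y', hy'hat, rfl⟩
  -- compute dot y' z
  have hdotz : dot y' z = μ⁻¹ := by
    have hz' : z = μ⁻¹ • p := by
      rw [hp, smul_smul, inv_mul_cancel₀ hμpos.ne', one_smul]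
    rw [hz', dot_eq_inner, real_inner_smul_right, ← dot_eq_inner, hy'p, mul_one]
  have hsum : (∑ r ∈ s.support, dot y' r * s r) = dot y' z := by
    rw [hz]
    rw [Finsupp.sum, dot_eq_inner, inner_sum]
    refine Finset.sum_congr rfl (fun r _ => ?_)
    rw [real_inner_smul_right, ← dot_eq_inner, mul_comm]
  have hμinv : (1:ℝ) ≤ μ⁻¹ := (one_le_inv₀ hμpos).mpr hμle1
  calc (1:ℝ) ≤ μ⁻¹ := hμinv
    _ = dot y' z := hdotz.symm
    _ = ∑ r ∈ s.support, dot y' r * s r := hsum.symm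
    _ ≤ ∑ r ∈ s.support, rho K r * s r :=
        Finset.sum_le_sum (fun r _ => mul_le_mul_of_nonneg_right (hrho r) (hs r))
    _ = s.sum fun r c => rho K r * c := rfl
end
end
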